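/- Let G be a finite simple graph, J a vertex subset with G|_J connected, and j ∈ J. Suppose J \ {j} is partitioned into nonempty sets I_1, …, I_r such that each G|_{I_p} is connected and G|_{I_p ∪ I_q} is disconnected for all p ≠ q. Then for each p there exists y_p ∈ I_p adjacent to j, and for p ≠ q the vertices y_p and y_q are not adjacent. In particular, if r ≥ 3, then G contains an induced claw (star with three edges). -/

import Mathlib

open SimpleGraph

def clawGraph : SimpleGraph (Fin 4) := SimpleGraph.fromEdgeSet {s(0,1), s(0,2), s(0,3)}

lemma claw_aux {V : Type*} (G : SimpleGraph V) (j a b c : V)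
    (hja : j ≠ a) (hjb : j ≠ b) (hjc : j ≠ c)
    (hab : a ≠ b) (hac : a ≠ c) (hbc : b ≠ c)
    (A0 : G.Adj j a) (A1 : G.Adj j b) (A2 : G.Adj j c)
    (N01 : ¬ G.Adj a b) (N02 : ¬ G.Adj a c) (N12 : ¬ G.Adj b c) :
    Nonempty (G.induce {j, a, b, c} ≃g clawGraph) := by
  have hvS : ∀ i : Fin 4, (![j, a, b, c] i) ∈ ({j, a, b, c} : Set V) := by
    intro i
    fin_cases i <;> simp
  let f : Fin 4 → ({j, a, b, c} : Set V) := fun i => ⟨![j, a, b, c] i, hvS i⟩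
  have hbij : Function.Bijective f := by
    constructor
    · intro i k hik
      have h' : (![j, a, b, c] i) = ![j, a, b, c] k := congrArg Subtype.val hik
      fin_cases i <;> fin_cases k <;> simp_all
    · rintro ⟨w, hw⟩
      rcases hw with rfl | rfl | rfl | rfl
      · exact ⟨0, rfl⟩
      · exact ⟨1, rfl⟩
      · exact ⟨2, rfl⟩
      · exact ⟨3, rfl⟩
  refine ⟨(RelIso.mk (Equiv.ofBijective f hbij) ?_).symm⟩
  intro i k
  show (G.induce _).Adj (f i) (f k) ↔ clawGraph.Adj i k
  have h2 : (G.induce _).Adj (f i) (f k) ↔ G.Adj (![j, a, b, c] i) (![j, a, b, c] k) := Iff.rfl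
  rw [h2]
  fin_cases i <;> fin_cases k <;>
    simp [clawGraph, fromEdgeSet_adj, Sym2.eq, Sym2.rel_iff', hja, hjb, hjc, hab, hac, hbc,
      G.irrefl] <;>
    first
      | exact A0
      | exact A1
      | exact A2
      | exact A0.symm
      | exact A1.symm
      | exact A2.symm
      | exact N01
      | exact N02
      | exact N12
      | exact fun h => N01 h.symm
      | exact fun h => N02 h.symm
      | exact fun h => N12 h.symm

theorem stmt5 {V : Type*} [Fintype V] (G : SimpleGraph V) (J : Set V) (j : V)
    (hJ : (G.induce J).Connected) (hj : j ∈ J) (r : ℕ) (I : Fin r → Set V)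
    (hne : ∀ p, (I p).Nonempty)
    (hdisj : ∀ p q, p ≠ q → Disjoint (I p) (I q))
    (hunion : (⋃ p, I p) = J \ {j})
    (hconn : ∀ p, (G.induce (I p)).Connected)
    (hsep : ∀ p q, p ≠ q → ¬ (G.induce (I p ∪ I q)).Connected) :
    ∃ y : Fin r → V,
      (∀ p, y p ∈ I p ∧ G.Adj j (y p)) ∧
      (∀ p q, p ≠ q → ¬ G.Adj (y p) (y q)) ∧
      (3 ≤ r → ∃ S : Set V, Nonempty (G.induce S ≃g clawGraph)) := by
  have hsub : ∀ p, I p ⊆ J \ {j} := by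
    intro p
    rw [← hunion]
    exact Set.subset_iUnion I p
  have noCross : ∀ p q, p ≠ q → ∀ a ∈ I p, ∀ b ∈ I q, ¬ G.Adj a b := by
    intro p q hpq a ha b hb hadj
    exact hsep p q hpq (connected_induce_union (hconn p).preconnected (hconn q).preconnected ha hb hadj)
  have key : ∀ (p : Fin r) (a b : J) (w : (G.induce J).Walk a b),
      (a : V) ∈ I p → ((b : V) ∈ I p ∨ ∃ y ∈ I p, G.Adj j y) := by
    intro p a b w
    induction w with
    | nil => exact fun h => Or.inl h
    | @cons u c d h w ih =>
      intro ha
      have hadj : G.Adj (u : V) (c : V) := h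
      by_cases hc : (c : V) = j
      · exact Or.inr ⟨u, ha, by rw [← hc]; exact hadj.symm⟩
      · have hcm : (c : V) ∈ ⋃ q, I q := by
          rw [hunion]; exact ⟨c.2, hc⟩
        obtain ⟨q, hq⟩ := Set.mem_iUnion.mp hcm
        by_cases hpq : q = p
        · exact ih (hpq ▸ hq)
        · exact absurd hadj (noCross p q (fun h => hpq h.symm) _ ha _ hq)
  have hy : ∀ p : Fin r, ∃ y ∈ I p, G.Adj j y := by
    intro p
    obtain ⟨x, hx⟩ := hne p
    have hxJ : x ∈ J := ((hsub p) hx).1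
    obtain ⟨w⟩ := hJ.preconnected ⟨x, hxJ⟩ ⟨j, hj⟩
    rcases key p _ _ w hx with hjI | h
    · exact absurd rfl ((hsub p) hjI).2
    · exact h
  choose y hyI hyAdj using hy
  have hnadj : ∀ p q, p ≠ q → ¬ G.Adj (y p) (y q) :=
    fun p q hpq => noCross p q hpq _ (hyI p) _ (hyI q)
  refine ⟨y, fun p => ⟨hyI p, hyAdj p⟩, hnadj, ?_⟩
  intro hr
  have hyj : ∀ p, y p ≠ j := fun p h => ((hsub p) (hyI p)).2 h
  have hne' : ∀ p q : Fin r, p ≠ q → y p ≠ y q := by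
    intro p q hpq h
    exact (hdisj p q hpq).ne_of_mem (hyI p) (hyI q) h
  set p0 : Fin r := ⟨0, by omega⟩
  set p1 : Fin r := ⟨1, by omega⟩
  set p2 : Fin r := ⟨2, by omega⟩
  have h01 : p0 ≠ p1 := by simp [p0, p1, Fin.ext_iff]
  have h02 : p0 ≠ p2 := by simp [p0, p2, Fin.ext_iff]
  have h12 : p1 ≠ p2 := by simp [p1, p2, Fin.ext_iff]
  exact ⟨{j, y p0, y p1, y p2},
    claw_aux G j (y p0) (y p1) (y p2)
      (fun h => hyj p0 h.symm) (fun h => hyj p1 h.symm) (fun h => hyj p2 h.symm)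
      (hne' _ _ h01) (hne' _ _ h02) (hne' _ _ h12)
      (hyAdj p0) (hyAdj p1) (hyAdj p2)
      (hnadj p0 p1 h01) (hnadj p0 p2 h02) (hnadj p1 p2 h12)⟩
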